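/- Let M, B, Λ ∈ M₂(ℝ) with M symmetric, invertible, and not a scalar multiple of the identity. Suppose BM and ΛM are symmetric (BM = (BM)ᵀ and ΛM = (ΛM)ᵀ) and that B and Λ do not commute ([B,Λ] = BΛ − ΛB ≠ 0). Then there exists a real constant β such that M = β·[B,Λ]·J, where J = [[0,1],[−1,0]]. -/
import Mathlib


open Matrix

noncomputable section

/-- If M is symmetric, invertible, and not scalar, BM and ΛM are symmetric, and
B and Λ do not commute, then M = β[B,Λ]J for some real β. -/
theorem M_from_commutator
    (M B Λ : Matrix (Fin 2) (Fin 2) ℝ)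
    (hMsym : Mᵀ = M) (hMinv : IsUnit M) (hMns : ∀ c : ℝ, M ≠ c • (1 : Matrix (Fin 2) (Fin 2) ℝ))
    (hBM : (B * M)ᵀ = B * M) (hΛM : (Λ * M)ᵀ = Λ * M)
    (hcomm : B * Λ - Λ * B ≠ 0) :
    ∃ β : ℝ, M = β • ((B * Λ - Λ * B) * !![0, 1; -1, 0]) := by
  set J : Matrix (Fin 2) (Fin 2) ℝ := !![0, 1; -1, 0] with hJ
  set C : Matrix (Fin 2) (Fin 2) ℝ := B * Λ - Λ * B with hC
  have h1 : M * Bᵀ = B * M := by rw [← hBM, transpose_mul, hMsym]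
  have h2 : M * Λᵀ = Λ * M := by rw [← hΛM, transpose_mul, hMsym]
  have e1 : (B * Λ * M)ᵀ = Λ * B * M := by
    rw [transpose_mul, transpose_mul, hMsym, ← mul_assoc, h2, mul_assoc, h1, ← mul_assoc]
  have e2 : (Λ * B * M)ᵀ = B * Λ * M := by
    rw [transpose_mul, transpose_mul, hMsym, ← mul_assoc, h1, mul_assoc, h2, ← mul_assoc]
  have hskew : (C * M)ᵀ = -(C * M) := by
    rw [hC, sub_mul, transpose_sub, e1, e2, neg_sub]
  set X : Matrix (Fin 2) (Fin 2) ℝ := C * M with hX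
  set a : ℝ := X 0 1 with ha
  have hXJ : X = a • J := by
    have h00 := congrFun (congrFun hskew 0) 0
    have h11 := congrFun (congrFun hskew 1) 1
    have h10 := congrFun (congrFun hskew 1) 0
    simp only [transpose_apply, Matrix.neg_apply] at h00 h11 h10
    ext i j
    fin_cases i <;> fin_cases j <;>
      simp [hJ, Matrix.smul_apply, ha] <;> linarith
  have hMdet : IsUnit M.det := (Matrix.isUnit_iff_isUnit_det M).mp hMinv
  have ha0 : a ≠ 0 := by
    intro h
    apply hcomm
    have hX0 : X = 0 := by rw [hXJ, h, zero_smul]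
    have : C = C * M * M⁻¹ := by rw [mul_assoc, Matrix.mul_nonsing_inv M hMdet, mul_one]
    rw [← hX, hX0, zero_mul] at this
    exact this
  have hdetJ : J.det = 1 := by simp [hJ, Matrix.det_fin_two_of]
  have hdetX : C.det * M.det = a ^ 2 := by
    have : X.det = (a • J).det := by rw [hXJ]
    rw [hX, det_mul, det_smul, hdetJ] at this
    simpa [sq, Fintype.card_fin] using this
  have hdetC : C.det ≠ 0 := by
    intro h
    rw [h, zero_mul] at hdetX
    exact ha0 (pow_eq_zero_iff (n := 2) (by norm_num) |>.mp hdetX.symm)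
  have htr : C.trace = 0 := by
    rw [hC, trace_sub, Matrix.trace_mul_comm, sub_self]
  have hadj : C.adjugate = -C := by
    have htr2 : C 0 0 + C 1 1 = 0 := by rw [← Matrix.trace_fin_two]; exact htr
    rw [Matrix.adjugate_fin_two]
    ext i j
    fin_cases i <;> fin_cases j <;> simp [Matrix.neg_apply] <;> linarith
  have key : C.det • M = (-a) • (C * J) := by
    calc C.det • M = (C.det • (1 : Matrix (Fin 2) (Fin 2) ℝ)) * M := by
          rw [smul_mul_assoc, one_mul]
      _ = C.adjugate * C * M := by rw [Matrix.adjugate_mul]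
      _ = C.adjugate * X := by rw [mul_assoc, ← hX]
      _ = (-C) * (a • J) := by rw [hadj, hXJ]
      _ = (-a) • (C * J) := by
          rw [Matrix.mul_smul, Matrix.neg_mul, smul_neg, ← neg_smul]
  refine ⟨-a / C.det, ?_⟩
  have := congrArg (fun N => (C.det)⁻¹ • N) key
  simp only [smul_smul, inv_mul_cancel₀ hdetC, one_smul] at this
  rw [this]
  ring_nf
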